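/- Let k ≥ 2 be a natural number and let a₀₁, a₀₂, a₁₁, a₁₂, b₁₁, b₁₂ be nonnegative reals; set a₀ = a₀₁ + a₀₂, a₁ = a₁₁ + a₁₂, b₁ = b₁₁ + b₁₂. Let (Πₙ)_{n≥0} be a nonnegative real sequence with Σ_{n≥0} Πₙ = 1 satisfying the balance equations: Π₀·a₀ = Π₁·b₁₂ + Π_k·b₁₁; Π₁·(a₁ + b₁₂) = Π₀·a₀₂ + Π₂·b₁₂ + Π_{k+1}·b₁₁; Πₙ·(a₁ + b₁₂) = Π_{n−1}·a₁₂ + Π_{n+1}·b₁₂ + Π_{n+k}·b₁₁ for all 2 ≤ n ≤ k−1; Π_k·(a₁ + b₁) = Π₀·a₀₁ + Π_{k−1}·a₁₂ + Π_{k+1}·b₁₂ + Π_{2k}·b₁₁; and Πₙ·(a₁ + b₁) = Π_{n−k}·a₁₁ + Π_{n−1}·a₁₂ + Π_{n+1}·b₁₂ + Π_{n+k}·b₁₁ for all n > k. Then Π₀·(b₁₂ + k·b₁₁ − a₁₂ − k·a₁₁ + a₀₂ + k·a₀₁) = (b₁₂ + k·b₁₁ − a₁₂ − k·a₁₁) −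 k·b₁₁·Σ_{n=1}^{k−1} Πₙ. -/

import Mathlib

open Finset

private def qf (p : ℕ → ℝ) (n : ℕ) : ℝ := if n = 0 then 0 else p n
private def rf (k : ℕ) (p : ℕ → ℝ) (n : ℕ) : ℝ := if n < k then 0 else p n

private lemma cut_lemma (k : ℕ) (hk : 2 ≤ k)
    (a01 a02 a11 a12 b11 b12 : ℝ)
    (p : ℕ → ℝ)
    (bal0 : p 0 * (a01 + a02) = p 1 * b12 + p k * b11)
    (bal1 : p 1 * ((a11 + a12) + b12) = p 0 * a02 + p 2 * b12 + p (k + 1) * b11)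
    (balmid : ∀ n, 2 ≤ n → n ≤ k - 1 →
        p n * ((a11 + a12) + b12) = p (n - 1) * a12 + p (n + 1) * b12 + p (n + k) * b11)
    (balk : p k * ((a11 + a12) + (b11 + b12))
        = p 0 * a01 + p (k - 1) * a12 + p (k + 1) * b12 + p (2 * k) * b11)
    (baln : ∀ n, k < n →
        p n * ((a11 + a12) + (b11 + b12))
          = p (n - k) * a11 + p (n - 1) * a12 + p (n + 1) * b12 + p (n + k) * b11) :
    ∀ N, p 0 * (if N = 0 then a02 else 0) + p 0 * (if N < k then a01 else 0)
        + a12 * qf p N + a11 * ∑ j ∈ range k, qf p (N - j)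
      = b12 * p (N + 1) + b11 * ∑ j ∈ range k, rf k p (N + 1 + j) := by
  intro N
  induction N with
  | zero =>
    have h1 : ∑ j ∈ range k, qf p (0 - j) = 0 := by
      apply Finset.sum_eq_zero; intro j _; simp [qf, Nat.zero_sub]
    have h2 : ∑ j ∈ range k, rf k p (0 + 1 + j) = p k := by
      rw [Finset.sum_eq_single_of_mem (k - 1) (by simp; omega)]
      · have e : 0 + 1 + (k - 1) = k := by omega
        rw [e, rf, if_neg (lt_irrefl k)]
      · intro b hb hbne
        simp only [Finset.mem_range] at hb
        rw [rf, if_pos (by omega)]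
    have hq0 : qf p 0 = 0 := by simp [qf]
    rw [h1, h2, hq0, if_pos rfl, if_pos (show (0:ℕ) < k by omega)]
    have e : (0:ℕ) + 1 = 1 := by norm_num
    rw [e]
    linear_combination bal0
  | succ N ih =>
    have hq1 : qf p (N + 1) = p (N + 1) := if_neg (Nat.succ_ne_zero N)
    have hsum1 : ∑ j ∈ range k, qf p (N + 1 - j)
        = p (N + 1) + (∑ j ∈ range k, qf p (N - j)) - qf p (N + 1 - k) := by
      obtain ⟨m, rfl⟩ : ∃ m, k = m + 1 := ⟨k - 1, by omega⟩
      rw [Finset.sum_range_succ' (fun j => qf p (N + 1 - j)) m,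
          Finset.sum_range_succ (fun j => qf p (N - j)) m]
      have e1 : ∀ j, N + 1 - (j + 1) = N - j := fun j => by omega
      have e2 : N + 1 - (m + 1) = N - m := by omega
      simp only [e1, e2, Nat.sub_zero, hq1]
      ring
    have hsum2 : ∑ j ∈ range k, rf k p (N + 1 + 1 + j)
        = (∑ j ∈ range k, rf k p (N + 1 + j)) - rf k p (N + 1) + p (N + 1 + k) := by
      obtain ⟨m, rfl⟩ : ∃ m, k = m + 1 := ⟨k - 1, by omega⟩
      rw [Finset.sum_range_succ (fun j => rf (m+1) p (N + 1 + 1 + j)) m,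
          Finset.sum_range_succ' (fun j => rf (m+1) p (N + 1 + j)) m]
      have e1 : ∀ j, N + 1 + 1 + j = N + 1 + (j + 1) := fun j => by omega
      have e2 : N + 1 + 1 + m = N + 1 + (m + 1) := by omega
      have e3 : rf (m+1) p (N + 1 + (m + 1)) = p (N + 1 + (m + 1)) := by
        rw [rf, if_neg (by omega)]
      simp only [e1, e2, Nat.add_zero, e3]
      ring
    rw [hsum1, hsum2, hq1,
        show (if N + 1 = 0 then a02 else 0) = 0 from if_neg (Nat.succ_ne_zero N)]
    rcases Nat.lt_or_ge (N + 1) k with hNk | hNk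
    · -- N + 1 < k
      have hq0 : qf p (N + 1 - k) = 0 := by
        rw [show N + 1 - k = 0 by omega]; simp [qf]
      have hr0 : rf k p (N + 1) = 0 := by rw [rf, if_pos hNk]
      rw [hq0, hr0, if_pos hNk]
      rcases Nat.eq_zero_or_pos N with rfl | hN
      · rw [if_pos rfl, if_pos (show (0:ℕ) < k by omega),
            show qf p 0 = 0 by simp [qf]] at ih
        have hb := bal1
        rw [Nat.add_comm k 1] at hb
        simp only [Nat.zero_add, Nat.reduceAdd] at ih ⊢
        linear_combination ih + hb
      · rw [if_neg (by omega), if_pos (by omega),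
            show qf p N = p N from if_neg (by omega)] at ih
        have hb := balmid (N + 1) (by omega) (by omega)
        rw [show N + 1 - 1 = N by omega] at hb
        linear_combination ih + hb
    · -- k ≤ N + 1
      have hr1 : rf k p (N + 1) = p (N + 1) := by rw [rf, if_neg (by omega)]
      rw [hr1, if_neg (by omega)]
      rcases Nat.eq_or_lt_of_le hNk with hNk' | hNk'
      · -- k = N + 1
        subst hNk'
        have hq0 : qf p (N + 1 - (N + 1)) = 0 := by
          rw [show N + 1 - (N + 1) = 0 by omega]; simp [qf]
        rw [hq0]
        rw [if_neg (by omega : ¬ N = 0), if_pos (by omega : N < N + 1),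
            show qf p N = p N from if_neg (by omega)] at ih
        have hb := balk
        rw [show N + 1 - 1 = N by omega,
            show 2 * (N + 1) = N + 1 + (N + 1) by ring] at hb
        linear_combination ih + hb
      · -- k < N + 1
        have hq0 : qf p (N + 1 - k) = p (N + 1 - k) := if_neg (by omega)
        rw [hq0]
        rw [if_neg (by omega : ¬ N = 0), if_neg (by omega : ¬ N < k),
            show qf p N = p N from if_neg (by omega)] at ih
        have hb := baln (N + 1) hNk'
        rw [show N + 1 - 1 = N by omega] at hb
        linear_combination ih + hb


/-- Generating-function identity at `z = 1` for the exact BS relay queue with rates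
`r₁ = k·r₂`: any nonnegative stationary distribution `(pₙ)` of total mass 1 satisfying the
balance equations satisfies
`Π₀·(b₁₂ + k b₁₁ − a₁₂ − k a₁₁ + a₀₂ + k a₀₁)
  = (b₁₂ + k b₁₁ − a₁₂ − k a₁₁) − k b₁₁ ∑_{n=1}^{k−1} Πₙ`. -/
theorem exact_chain_generating_function_identity
    (k : ℕ) (hk : 2 ≤ k)
    (a01 a02 a11 a12 b11 b12 : ℝ)
    (ha01 : 0 ≤ a01) (ha02 : 0 ≤ a02) (ha11 : 0 ≤ a11) (ha12 : 0 ≤ a12)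
    (hb11 : 0 ≤ b11) (hb12 : 0 ≤ b12)
    (a0 a1 b1 : ℝ) (ha0 : a0 = a01 + a02) (ha1 : a1 = a11 + a12) (hb1 : b1 = b11 + b12)
    (p : ℕ → ℝ) (hp : ∀ n, 0 ≤ p n) (hsum : ∑' n, p n = 1)
    (bal0 : p 0 * a0 = p 1 * b12 + p k * b11)
    (bal1 : p 1 * (a1 + b12) = p 0 * a02 + p 2 * b12 + p (k + 1) * b11)
    (balmid : ∀ n, 2 ≤ n → n ≤ k - 1 →
        p n * (a1 + b12) = p (n - 1) * a12 + p (n + 1) * b12 + p (n + k) * b11)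
    (balk : p k * (a1 + b1)
        = p 0 * a01 + p (k - 1) * a12 + p (k + 1) * b12 + p (2 * k) * b11)
    (baln : ∀ n, k < n →
        p n * (a1 + b1)
          = p (n - k) * a11 + p (n - 1) * a12 + p (n + 1) * b12 + p (n + k) * b11) :
    p 0 * (b12 + k * b11 - a12 - k * a11 + a02 + k * a01)
      = (b12 + k * b11 - a12 - k * a11)
        - k * b11 * ∑ n ∈ Finset.Icc 1 (k - 1), p n := by
  subst ha0 ha1 hb1
  have hUD := cut_lemma k hk a01 a02 a11 a12 b11 b12 p bal0 bal1 balmid balk baln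
  -- summability of p
  have hS : Summable p := by
    by_contra h
    rw [tsum_eq_zero_of_not_summable h] at hsum
    norm_num at hsum
  -- summability and tsum of qf
  have hq : Summable (qf p) := by
    apply (summable_nat_add_iff 1).mp
    have e : (fun n => qf p (n + 1)) = fun n => p (n + 1) := by
      funext n; rw [qf, if_neg (Nat.succ_ne_zero n)]
    rw [e]
    exact (summable_nat_add_iff 1).mpr hS
  have hqt : ∑' n, qf p n = 1 - p 0 := by
    have h := Summable.tsum_eq_add_tsum_ite hS 0
    rw [hsum] at h
    have e : ∑' n, (if n = 0 then 0 else p n) = ∑' n, qf p n :=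
      tsum_congr fun n => rfl
    rw [e] at h
    linarith
  -- window sums for the a11 part
  have hgsum : ∀ j : ℕ, Summable (fun N => qf p (N - j)) := by
    intro j
    apply (summable_nat_add_iff j).mp
    have e : (fun n => qf p (n + j - j)) = qf p := by
      funext n; rw [Nat.add_sub_cancel]
    rw [e]; exact hq
  have hgt : ∀ j : ℕ, ∑' N, qf p (N - j) = 1 - p 0 := by
    intro j
    have h := Summable.sum_add_tsum_nat_add (f := fun N => qf p (N - j)) j (hgsum j)
    have h0 : ∑ i ∈ range j, qf p (i - j) = 0 := by
      apply Finset.sum_eq_zero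
      intro i hi
      rw [show i - j = 0 by simp only [Finset.mem_range] at hi; omega]
      simp [qf]
    rw [h0, zero_add] at h
    have e : ∑' i : ℕ, qf p (i + j - j) = ∑' i, qf p i :=
      tsum_congr fun i => by rw [Nat.add_sub_cancel]
    rw [e] at h
    rw [← h, hqt]
  have hEsum : Summable (fun N => ∑ j ∈ range k, qf p (N - j)) :=
    summable_sum fun j _ => hgsum j
  have hEt : ∑' N, ∑ j ∈ range k, qf p (N - j) = k * (1 - p 0) := by
    rw [Summable.tsum_finsetSum fun j _ => hgsum j]
    rw [Finset.sum_congr rfl fun j _ => hgt j, Finset.sum_const, Finset.card_range,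
        nsmul_eq_mul]
  -- summability and tsum of rf
  have hr : Summable (rf k p) := by
    apply (summable_nat_add_iff k).mp
    have e : (fun n => rf k p (n + k)) = fun n => p (n + k) := by
      funext n; rw [rf, if_neg (by omega)]
    rw [e]
    exact (summable_nat_add_iff k).mpr hS
  have hrt : ∑' n, rf k p n = 1 - ∑ i ∈ range k, p i := by
    have h := Summable.sum_add_tsum_nat_add (f := rf k p) k hr
    have h0 : ∑ i ∈ range k, rf k p i = 0 := by
      apply Finset.sum_eq_zero
      intro i hi
      rw [rf, if_pos (Finset.mem_range.mp hi)]
    rw [h0, zero_add] at h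
    have e : ∑' i : ℕ, rf k p (i + k) = ∑' i, p (i + k) :=
      tsum_congr fun i => by rw [rf, if_neg (by omega)]
    have h2 := Summable.sum_add_tsum_nat_add (f := p) k hS
    rw [hsum] at h2
    rw [e] at h
    linarith
  have hDg : ∀ j : ℕ, Summable (fun N => rf k p (N + 1 + j)) := by
    intro j
    have e : (fun N => rf k p (N + 1 + j)) = fun N => rf k p (N + (1 + j)) := by
      funext N; rw [Nat.add_assoc]
    rw [e]
    exact (summable_nat_add_iff (1 + j)).mpr hr
  have hDt : ∀ j : ℕ, j < k → ∑' N, rf k p (N + 1 + j) = 1 - ∑ i ∈ range k, p i := by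
    intro j hj
    have h := Summable.sum_add_tsum_nat_add (f := rf k p) (1 + j) hr
    have h0 : ∑ i ∈ range (1 + j), rf k p i = 0 := by
      apply Finset.sum_eq_zero
      intro i hi
      rw [rf, if_pos (by simp only [Finset.mem_range] at hi; omega)]
    rw [h0, zero_add] at h
    have e : ∑' N : ℕ, rf k p (N + 1 + j) = ∑' N : ℕ, rf k p (N + (1 + j)) :=
      tsum_congr fun N => by rw [Nat.add_assoc]
    rw [e, h, hrt]
  have hDsum : Summable (fun N => ∑ j ∈ range k, rf k p (N + 1 + j)) :=
    summable_sum fun j _ => hDg j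
  have hDt2 : ∑' N, ∑ j ∈ range k, rf k p (N + 1 + j)
      = k * (1 - ∑ i ∈ range k, p i) := by
    rw [Summable.tsum_finsetSum fun j _ => hDg j]
    rw [Finset.sum_congr rfl fun j hj => hDt j (Finset.mem_range.mp hj),
        Finset.sum_const, Finset.card_range, nsmul_eq_mul]
  -- A and B parts
  have hA : Summable (fun N : ℕ => p 0 * (if N = 0 then a02 else 0)) := by
    apply summable_of_ne_finset_zero (s := {0})
    intro b hb
    simp only [Finset.mem_singleton] at hb
    rw [if_neg hb, mul_zero]
  have hAt : ∑' N : ℕ, p 0 * (if N = 0 then a02 else 0) = p 0 * a02 := by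
    rw [tsum_mul_left, tsum_ite_eq]
  have hB : Summable (fun N : ℕ => p 0 * (if N < k then a01 else 0)) := by
    apply summable_of_ne_finset_zero (s := range k)
    intro b hb
    simp only [Finset.mem_range] at hb
    rw [if_neg hb, mul_zero]
  have hBt : ∑' N : ℕ, p 0 * (if N < k then a01 else 0) = k * (p 0 * a01) := by
    rw [tsum_mul_left]
    have e : ∑' N : ℕ, (if N < k then a01 else 0) = k * a01 := by
      rw [tsum_eq_sum (s := range k)
        (fun b hb => if_neg (by simpa using hb))]
      rw [Finset.sum_congr rfl fun j hj => if_pos (Finset.mem_range.mp hj),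
          Finset.sum_const, Finset.card_range, nsmul_eq_mul]
    rw [e]; ring
  -- sum the cut identities
  have key : ∑' N, (p 0 * (if N = 0 then a02 else 0) + p 0 * (if N < k then a01 else 0)
        + a12 * qf p N + a11 * ∑ j ∈ range k, qf p (N - j))
      = ∑' N, (b12 * p (N + 1) + b11 * ∑ j ∈ range k, rf k p (N + 1 + j)) :=
    tsum_congr hUD
  have hp1S : Summable (fun N : ℕ => p (N + 1)) := (summable_nat_add_iff 1).mpr hS
  rw [Summable.tsum_add ((hA.add hB).add ((hq.mul_left a12))) (hEsum.mul_left a11),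
      Summable.tsum_add (hA.add hB) (hq.mul_left a12),
      Summable.tsum_add hA hB,
      Summable.tsum_add (hp1S.mul_left b12) (hDsum.mul_left b11)] at key
  simp only [tsum_mul_left] at key
  have hp1t : ∑' N : ℕ, p (N + 1) = 1 - p 0 := by
    have h := Summable.sum_add_tsum_nat_add (f := p) 1 hS
    rw [hsum] at h
    simp only [Finset.range_one, Finset.sum_singleton] at h
    linarith
  have e1 : ∑' x : ℕ, (if x = 0 then a02 else 0) = a02 := tsum_ite_eq 0 (fun _ => a02)
  have e2 : ∑' x : ℕ, (if x < k then a01 else 0) = k * a01 := by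
    rw [tsum_eq_sum (s := range k) (fun b hb => if_neg (by simpa using hb))]
    rw [Finset.sum_congr rfl fun j hj => if_pos (Finset.mem_range.mp hj),
        Finset.sum_const, Finset.card_range, nsmul_eq_mul]
  rw [e1, e2, hqt, hEt, hp1t, hDt2] at key
  -- rewrite the range-k sum as p 0 plus the Icc sum
  have hsplit : ∑ i ∈ range k, p i = p 0 + ∑ n ∈ Finset.Icc 1 (k - 1), p n := by
    have e1 : Finset.Icc 1 (k - 1) = Finset.Ico 1 k := by
      rw [← Finset.Ico_add_one_right_eq_Icc]
      congr 1
      omega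
    rw [e1, Finset.range_eq_Ico,
        ← Finset.sum_Ico_consecutive _ (by omega : (0:ℕ) ≤ 1) (by omega : 1 ≤ k)]
    simp
  rw [hsplit] at key
  linear_combination key
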